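/- Let G be a group and φ an automorphism of G of finite order, say φᵐ = id for some m ≥ 1. Then for every gZ(G) ∈ Fix φ̄ one has (g⁻¹·φ(g))ᵐ ∈ I_φ; consequently the image of the homomorphism ε_φ : Fix φ̄ → Z(G)/I_φ, gZ(G) ↦ g⁻¹·φ(g)·I_φ, is an abelian group of exponent dividing m, and if Fix φ̄ is finitely generated then P_φ = ker ε_φ has finite index in Fix φ̄. -/

import Mathlib

/-- The subgroup of fixed points of an automorphism `φ` of `G`:
`Fix φ = {g ∈ G | φ(g) = g}`. -/
def fixedSubgroup {G : Type*} [Group G] (φ : G ≃* G) : Subgroup G where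
  carrier := {g | φ g = g}
  one_mem' := map_one φ
  mul_mem' := by
    intro a b ha hb
    simp only [Set.mem_setOf_eq, map_mul] at *
    rw [ha, hb]
  inv_mem' := by
    intro a ha
    simp only [Set.mem_setOf_eq, map_inv] at *
    rw [ha]

lemma center_apply_mem {G : Type*} [Group G] (φ : G ≃* G) {z : G}
    (hz : z ∈ Subgroup.center G) : φ z ∈ Subgroup.center G := by
  rw [Subgroup.mem_center_iff]
  intro g
  calc g * φ z = φ (φ.symm g) * φ z := by rw [MulEquiv.apply_symm_apply]
    _ = φ (φ.symm g * z) := by rw [map_mul]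
    _ = φ (z * φ.symm g) := by rw [Subgroup.mem_center_iff.mp hz (φ.symm g)]
    _ = φ z * φ (φ.symm g) := by rw [map_mul]
    _ = φ z * g := by rw [MulEquiv.apply_symm_apply]

/-- The subgroup `I_φ = {z⁻¹ * φ(z) | z ∈ Z(G)}` of `G` (contained in `Z(G)`). -/
def Iphi {G : Type*} [Group G] (φ : G ≃* G) : Subgroup G where
  carrier := {x | ∃ z ∈ Subgroup.center G, x = z⁻¹ * φ z}
  one_mem' := ⟨1, Subgroup.one_mem _, by simp⟩
  mul_mem' := by
    rintro a b ⟨z₁, hz₁, rfl⟩ ⟨z₂, hz₂, rfl⟩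
    refine ⟨z₁ * z₂, mul_mem hz₁ hz₂, ?_⟩
    have hc : z₂⁻¹ * (z₁⁻¹ * φ z₁) = (z₁⁻¹ * φ z₁) * z₂⁻¹ :=
      Subgroup.mem_center_iff.mp (mul_mem (inv_mem hz₁) (center_apply_mem φ hz₁)) z₂⁻¹
    calc z₁⁻¹ * φ z₁ * (z₂⁻¹ * φ z₂)
        = ((z₁⁻¹ * φ z₁) * z₂⁻¹) * φ z₂ := by simp [mul_assoc]
      _ = (z₂⁻¹ * (z₁⁻¹ * φ z₁)) * φ z₂ := by rw [hc]
      _ = (z₁ * z₂)⁻¹ * φ (z₁ * z₂) := by rw [map_mul, mul_inv_rev]; simp [mul_assoc]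
  inv_mem' := by
    rintro a ⟨z, hz, rfl⟩
    refine ⟨z⁻¹, inv_mem hz, ?_⟩
    have h : Commute z (φ z) := Subgroup.mem_center_iff.mp (center_apply_mem φ hz) z
    rw [mul_inv_rev, inv_inv, map_inv]
    exact h.inv_right.eq.symm

lemma Iphi_le_center {G : Type*} [Group G] (φ : G ≃* G) :
    Iphi φ ≤ Subgroup.center G := by
  rintro x ⟨z, hz, rfl⟩
  exact mul_mem (inv_mem hz) (center_apply_mem φ hz)

/-- `I_φ` viewed as a subgroup of the center `Z(G)`. -/
def IphiZ {G : Type*} [Group G] (φ : G ≃* G) : Subgroup ↥(Subgroup.center G) :=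
  (Iphi φ).comap (Subgroup.center G).subtype


section Aux

variable {G : Type*} [Group G] (φ : G ≃* G)

/-- `φ` restricted to the center, as a monoid hom of the center. -/
def psiC : ↥(Subgroup.center G) →* ↥(Subgroup.center G) where
  toFun z := ⟨φ z, center_apply_mem φ z.2⟩
  map_one' := by ext; simp
  map_mul' a b := by ext; simp

lemma psiC_coe (z : ↥(Subgroup.center G)) : ((psiC φ z : ↥(Subgroup.center G)) : G) = φ (z : G) := rfl

set_option maxHeartbeats 1000000 in
open scoped IsMulCommutative in
lemma pow_mem_Iphi_aux (m : ℕ) (hord : ∀ g : G, (⇑φ)^[m] g = g)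
    (g : G) (hx : g⁻¹ * φ g ∈ Subgroup.center G) :
    (g⁻¹ * φ g) ^ m ∈ Iphi φ := by
  set C := ↥(Subgroup.center G)
  set ψ : C →* C := psiC φ with hψ
  set x : C := ⟨g⁻¹ * φ g, hx⟩ with hxdef
  set T : ℕ → C := fun k => ∏ i ∈ Finset.range k, (⇑ψ)^[i] x with hTdef
  have hTsucc : ∀ k, T (k + 1) = T k * (⇑ψ)^[k] x := by
    intro k; simp [hTdef, Finset.prod_range_succ]
  have hTpsi : ∀ k, ψ (T k) * x = T (k + 1) := by
    intro k
    induction k with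
    | zero => simp [hTdef]
    | succ k ih =>
      rw [hTsucc k, map_mul, mul_comm (ψ (T k)) (ψ ((⇑ψ)^[k] x)), mul_assoc, ih,
        ← Function.iterate_succ_apply' (⇑ψ) k x, hTsucc (k + 1), mul_comm]
  have hgphix : φ g = g * (x : G) := by
    simp [hxdef, ← mul_assoc]
  have hT1 : ∀ k, (⇑φ)^[k] g = g * ((T k : C) : G) := by
    intro k
    induction k with
    | zero => simp [hTdef]
    | succ k ih =>
      rw [Function.iterate_succ_apply', ih, map_mul, ← hTpsi k]
      have hco : φ ((T k : C) : G) = ((ψ (T k) : C) : G) := rfl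
      rw [hco]
      calc φ g * ((ψ (T k) : C) : G) = g * (((x : C) : G) * ((ψ (T k) : C) : G)) := by
            rw [hgphix, mul_assoc]
        _ = g * (((ψ (T k) : C) : G) * ((x : C) : G)) := by
            rw [Subgroup.mem_center_iff.mp x.2 _]
        _ = g * ((ψ (T k) * x : C) : G) := rfl
  have hTm : T m = 1 := by
    have := hT1 m
    rw [hord g] at this
    have : ((T m : C) : G) = 1 := by
      have h := this.symm
      rwa [mul_eq_left] at h
    exact Subtype.ext this
  have hmain : ∀ k, ∃ z : C, x ^ k = T k * z⁻¹ * ψ z := by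
    intro k
    induction k with
    | zero => exact ⟨1, by simp [hTdef]⟩
    | succ k ih =>
      obtain ⟨z, hz⟩ := ih
      refine ⟨z * (T k)⁻¹, ?_⟩
      rw [pow_succ, hz, hTsucc k, map_mul, map_inv]
      have h1 : ψ (T k) = T k * (⇑ψ)^[k] x * x⁻¹ := by
        rw [← hTsucc k, ← hTpsi k, mul_inv_cancel_right]
      rw [h1]
      simp only [mul_inv_rev, inv_inv]
      -- commutative group identity
      simp only [mul_comm, mul_left_comm, mul_assoc, inv_mul_cancel_left, mul_inv_cancel_left,
        inv_mul_cancel, mul_inv_cancel, mul_one, one_mul, inv_inv]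
      exact congrArg (fun t => z⁻¹ * (t * (ψ z * T k))) (inv_inv x).symm
  obtain ⟨z, hz⟩ := hmain m
  rw [hTm, one_mul] at hz
  refine ⟨(z : G), z.2, ?_⟩
  calc (g⁻¹ * φ g) ^ m = ((x ^ m : C) : G) := by rw [hxdef]; rfl
    _ = ((z⁻¹ * ψ z : C) : G) := by rw [hz]
    _ = ((z : G))⁻¹ * φ (z : G) := rfl

end Aux

/-- If `φᵐ = id` with `m ≥ 1`, then for every `gZ(G) ∈ Fix φ̄` one has
`(g⁻¹φ(g))ᵐ ∈ I_φ`; the image of `ε_φ : Fix φ̄ → Z(G)/I_φ` has exponent dividing `m`;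
and if `Fix φ̄` is finitely generated then `P_φ = ker ε_φ` has finite index in `Fix φ̄`. -/
theorem finite_order_pow_mem_Iphi {G : Type*} [Group G] (φ : G ≃* G)
    (m : ℕ) (hm : 1 ≤ m) (hord : ∀ g : G, (⇑φ)^[m] g = g)
    (φbar : (G ⧸ Subgroup.center G) ≃* (G ⧸ Subgroup.center G))
    (hbar : ∀ g : G, φbar (QuotientGroup.mk g) = QuotientGroup.mk (φ g))
    (ε : ↥(fixedSubgroup φbar) →* (↥(Subgroup.center G) ⧸ IphiZ φ))
    (hε : ∀ (g : G) (hg : g⁻¹ * φ g ∈ Subgroup.center G)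
        (hmem : (QuotientGroup.mk g : G ⧸ Subgroup.center G) ∈ fixedSubgroup φbar),
        ε ⟨QuotientGroup.mk g, hmem⟩ =
          QuotientGroup.mk (⟨g⁻¹ * φ g, hg⟩ : ↥(Subgroup.center G))) :
    (∀ g : G, g⁻¹ * φ g ∈ Subgroup.center G → (g⁻¹ * φ g) ^ m ∈ Iphi φ) ∧
    (∀ x : ↥(fixedSubgroup φbar), (ε x) ^ m = 1) ∧
    (Group.FG ↥(fixedSubgroup φbar) → (MonoidHom.ker ε).FiniteIndex) := by
  have part1 : ∀ g : G, g⁻¹ * φ g ∈ Subgroup.center G → (g⁻¹ * φ g) ^ m ∈ Iphi φ :=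
    fun g hg => pow_mem_Iphi_aux φ m hord g hg
  have part2 : ∀ x : ↥(fixedSubgroup φbar), (ε x) ^ m = 1 := by
    rintro ⟨q, hq⟩
    obtain ⟨g, rfl⟩ := QuotientGroup.mk_surjective q
    have hfix : φbar (QuotientGroup.mk g) = QuotientGroup.mk g := hq
    have heq : (QuotientGroup.mk g : G ⧸ Subgroup.center G) = QuotientGroup.mk (φ g) := by
      rw [← hbar]; exact hfix.symm
    have hg : g⁻¹ * φ g ∈ Subgroup.center G := (QuotientGroup.eq).mp heq
    rw [hε g hg hq]
    have : (QuotientGroup.mk (⟨g⁻¹ * φ g, hg⟩ : ↥(Subgroup.center G)) :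
        ↥(Subgroup.center G) ⧸ IphiZ φ) ^ m =
        QuotientGroup.mk ((⟨g⁻¹ * φ g, hg⟩ : ↥(Subgroup.center G)) ^ m) := rfl
    rw [this, QuotientGroup.eq_one_iff]
    show ((⟨g⁻¹ * φ g, hg⟩ : ↥(Subgroup.center G)) ^ m : ↥(Subgroup.center G)) ∈ IphiZ φ
    have : (((⟨g⁻¹ * φ g, hg⟩ : ↥(Subgroup.center G)) ^ m : ↥(Subgroup.center G)) : G) =
        (g⁻¹ * φ g) ^ m := by push_cast; rfl
    simp only [IphiZ, Subgroup.mem_comap, Subgroup.coe_subtype, this]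
    exact part1 g hg
  refine ⟨part1, part2, ?_⟩
  intro hFG
  haveI := hFG
  have hrangeFG : Group.FG ↥ε.range := Group.fg_range ε
  have htors : Monoid.IsTorsion ↥ε.range := by
    rintro ⟨y, x, rfl⟩
    refine isOfFinOrder_iff_pow_eq_one.mpr ⟨m, hm, ?_⟩
    ext
    push_cast
    exact part2 x
  have hfin : Finite ↥ε.range := by
    open scoped IsMulCommutative in
    exact CommGroup.finite_of_fg_torsion _ htors
  have hquot : Finite (↥(fixedSubgroup φbar) ⧸ MonoidHom.ker ε) :=
    Finite.of_equiv _ (QuotientGroup.quotientKerEquivRange ε).toEquiv.symm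
  exact Subgroup.finiteIndex_of_finite_quotient
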